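/- Let B be a uniformly random subset of {1,…,n} of cardinality b (b-nice sampling) and let f_B(x) = (1/b) Σ_{i∈B} f_i(x). Then for every x ∈ ℝ^d and every minimizer x* of f: E_B[‖∇f_B(x) − ∇f_B(x*)‖²] ≤ 2 ℒ(b) · D_f(x, x*), where ℒ(b) = ((n−b)/(b(n−1))) L_max + (n(b−1)/(b(n−1))) L and L_max = max_i L_i. -/

import Mathlib

open Finset
open scoped RealInnerProductSpace

lemma aux_quad {A c L : ℝ} (hA : 0 ≤ A) (hL : 0 ≤ L)
    (h : ∀ t : ℝ, 0 ≤ t → 0 ≤ c - t * A + L * t ^ 2 / 2 * A) : A ≤ 2 * L * c := by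
  rcases hL.eq_or_lt with hL0 | hLpos
  · subst hL0
    have hc : 0 ≤ c := by simpa using h 0 le_rfl
    rcases hA.eq_or_lt with hA0 | hApos
    · nlinarith
    · exfalso
      have := h ((c + 1) / A) (by positivity)
      have hx : (c + 1) / A * A = c + 1 := div_mul_cancel₀ _ (ne_of_gt hApos)
      nlinarith
  · have h2 := h (1 / L) (by positivity)
    have e : c - 1 / L * A + L * (1 / L) ^ 2 / 2 * A = c - A / (2 * L) := by
      field_simp; ring
    rw [e, sub_nonneg, div_le_iff₀ (by positivity)] at h2
    linarith

lemma count_contains {α : Type*} [Fintype α] [DecidableEq α] {b : ℕ} (t : Finset α) (htb : t.card ≤ b) :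
    ((Finset.univ.powersetCard b).filter (fun B => t ⊆ B)).card
      = (Fintype.card α - t.card).choose (b - t.card) := by
  rw [← Finset.card_compl t, ← Finset.card_powersetCard (b - t.card) tᶜ]
  apply Finset.card_bij (fun B _ => B \ t)
  · intro B hB
    simp only [Finset.mem_filter, Finset.mem_powersetCard_univ] at hB
    rw [Finset.mem_powersetCard]
    exact ⟨fun x hx => by simp [Finset.mem_compl, (Finset.mem_sdiff.mp hx).2],
      by rw [Finset.card_sdiff_of_subset hB.2, hB.1]⟩
  · intro B1 h1 B2 h2 he
    simp only [Finset.mem_filter, Finset.mem_powersetCard_univ] at h1 h2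
    rw [← Finset.sdiff_union_of_subset h1.2, ← Finset.sdiff_union_of_subset h2.2, he]
  · intro C hC
    rw [Finset.mem_powersetCard] at hC
    have hdisj : Disjoint C t := Finset.disjoint_left.mpr (fun x hx => by
      have := hC.1 hx; simpa [Finset.mem_compl] using this)
    refine ⟨C ∪ t, ?_, ?_⟩
    · simp only [Finset.mem_filter, Finset.mem_powersetCard_univ]
      constructor
      · rw [Finset.card_union_of_disjoint hdisj, hC.2]
        omega
      · exact Finset.subset_union_right
    · exact Finset.union_sdiff_cancel_right hdisj

lemma expand_sum {n b : ℕ} {E : Type*} [NormedAddCommGroup E] [InnerProductSpace ℝ E]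
    (a : Fin n → E) (N₁ N₂ : ℕ)
    (h1 : ∀ i : Fin n,
      (((Finset.univ : Finset (Fin n)).powersetCard b).filter (fun B => i ∈ B ∧ i ∈ B)).card = N₁)
    (h2 : ∀ i j : Fin n, i ≠ j →
      (((Finset.univ : Finset (Fin n)).powersetCard b).filter (fun B => i ∈ B ∧ j ∈ B)).card = N₂) :
    (∑ B ∈ (Finset.univ : Finset (Fin n)).powersetCard b, ‖∑ i ∈ B, a i‖ ^ 2 : ℝ)
      = (N₁ : ℝ) * ∑ i, ‖a i‖ ^ 2 + (N₂ : ℝ) * (‖∑ i, a i‖ ^ 2 - ∑ i, ‖a i‖ ^ 2) := by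
  have step1 : ∀ B : Finset (Fin n), ‖∑ i ∈ B, a i‖ ^ 2
      = ∑ i, ∑ j, if i ∈ B ∧ j ∈ B then ⟪a i, a j⟫ else 0 := by
    intro B
    have e1 : ∀ i : Fin n, (∑ j, if i ∈ B ∧ j ∈ B then ⟪a i, a j⟫ else 0)
        = if i ∈ B then ∑ j ∈ B, ⟪a i, a j⟫ else 0 := by
      intro i
      by_cases hi : i ∈ B
      · simp only [hi, true_and, if_true]
        rw [← Finset.sum_filter]
        congr 1
        ext j; simp
      · simp [hi]
    rw [Finset.sum_congr rfl fun i _ => e1 i, ← Finset.sum_filter]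
    rw [show Finset.univ.filter (fun i => i ∈ B) = B by ext j; simp]
    rw [← real_inner_self_eq_norm_sq, sum_inner]
    exact Finset.sum_congr rfl fun i _ => inner_sum _ _ _
  rw [Finset.sum_congr rfl fun B _ => step1 B, Finset.sum_comm]
  have count : ∀ i : Fin n, ∑ B ∈ (Finset.univ : Finset (Fin n)).powersetCard b,
      ∑ j, (if i ∈ B ∧ j ∈ B then ⟪a i, a j⟫ else 0)
      = ∑ j, ((((Finset.univ : Finset (Fin n)).powersetCard b).filter
          (fun B => i ∈ B ∧ j ∈ B)).card : ℝ) * ⟪a i, a j⟫ := by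
    intro i
    rw [Finset.sum_comm]
    refine Finset.sum_congr rfl fun j _ => ?_
    rw [← Finset.sum_filter, Finset.sum_const, nsmul_eq_mul]
  rw [Finset.sum_congr rfl fun i _ => count i]
  have key : ∀ i j : Fin n, ((((Finset.univ : Finset (Fin n)).powersetCard b).filter
      (fun B => i ∈ B ∧ j ∈ B)).card : ℝ) * ⟪a i, a j⟫
      = (N₂ : ℝ) * ⟪a i, a j⟫ + (if j = i then ((N₁ : ℝ) - N₂) * ⟪a i, a j⟫ else 0) := by
    intro i j
    by_cases hij : j = i
    · subst hij; rw [h1 j]; simp; ring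
    · rw [h2 i j (fun h => hij h.symm)]; simp [hij]
  rw [Finset.sum_congr rfl fun i _ => Finset.sum_congr rfl fun j _ => key i j]
  rw [Finset.sum_congr rfl (fun i _ => Finset.sum_add_distrib), Finset.sum_add_distrib]
  have d1 : ∑ i : Fin n, ∑ j : Fin n, (N₂ : ℝ) * ⟪a i, a j⟫
      = (N₂ : ℝ) * ‖∑ i, a i‖ ^ 2 := by
    rw [← real_inner_self_eq_norm_sq, sum_inner, Finset.mul_sum]
    refine Finset.sum_congr rfl fun i _ => ?_
    rw [inner_sum, Finset.mul_sum]
  have d2 : ∑ i : Fin n, ∑ j : Fin n, (if j = i then ((N₁ : ℝ) - N₂) * ⟪a i, a j⟫ else 0)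
      = ((N₁ : ℝ) - N₂) * ∑ i, ‖a i‖ ^ 2 := by
    rw [Finset.mul_sum]
    refine Finset.sum_congr rfl fun i _ => ?_
    rw [Finset.sum_ite_eq' Finset.univ i (fun j => ((N₁ : ℝ) - N₂) * ⟪a i, a j⟫)]
    simp [real_inner_self_eq_norm_sq]
  rw [d1, d2]; ring


set_option maxHeartbeats 1000000 in
/-- expected smoothness for `b`-nice sampling (minibatching without
replacement): `E_B[‖∇f_B(x) − ∇f_B(x*)‖²] ≤ 2 ℒ(b) D_f(x, x*)` where
`ℒ(b) = ((n−b)/(b(n−1))) L_max + (n(b−1)/(b(n−1))) L`. -/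
theorem stmt_7
    {d n b : ℕ} (hn : 2 ≤ n) (hb1 : 1 ≤ b) (hbn : b ≤ n)
    (f : Fin n → EuclideanSpace ℝ (Fin d) → ℝ)
    (f' : Fin n → EuclideanSpace ℝ (Fin d) → EuclideanSpace ℝ (Fin d))
    (Li : Fin n → ℝ) (L : ℝ)
    -- each f_i is convex and L_i-smooth
    (hsmooth : ∀ i x y, f i y ≤ f i x + ⟪f' i x, y - x⟫ + Li i / 2 * ‖y - x‖ ^ 2)
    (hconv : ∀ i x y, f i x + ⟪f' i x, y - x⟫ ≤ f i y)
    -- f = (1/n) Σ f_i is itself L-smooth, with gradient ∇f = (1/n) Σ ∇f_i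
    (hsmoothf : ∀ x y, (n : ℝ)⁻¹ * ∑ i, f i y
      ≤ (n : ℝ)⁻¹ * ∑ i, f i x + ⟪(n : ℝ)⁻¹ • ∑ i, f' i x, y - x⟫ + L / 2 * ‖y - x‖ ^ 2)
    -- x* is a minimizer of f
    (xstar : EuclideanSpace ℝ (Fin d))
    (hmin : ∀ y, (n : ℝ)⁻¹ * ∑ i, f i xstar ≤ (n : ℝ)⁻¹ * ∑ i, f i y)
    (x : EuclideanSpace ℝ (Fin d)) :
    ((n.choose b : ℝ))⁻¹ * ∑ B ∈ (Finset.univ : Finset (Fin n)).powersetCard b,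
        ‖(b : ℝ)⁻¹ • ∑ i ∈ B, f' i x - (b : ℝ)⁻¹ • ∑ i ∈ B, f' i xstar‖ ^ 2
    ≤ 2 * (((n : ℝ) - b) / (b * ((n : ℝ) - 1))
            * Finset.univ.sup' ⟨⟨0, lt_of_lt_of_le two_pos hn⟩, Finset.mem_univ _⟩ Li
          + (n : ℝ) * ((b : ℝ) - 1) / (b * ((n : ℝ) - 1)) * L)
        * ((n : ℝ)⁻¹ * ∑ i, f i x - (n : ℝ)⁻¹ * ∑ i, f i xstar
          - ⟪(n : ℝ)⁻¹ • ∑ j, f' j xstar, x - xstar⟫) := by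
  rcases Nat.eq_zero_or_pos d with hd | hd
  · -- trivial case : the space is a subsingleton
    subst hd
    haveI : Subsingleton (EuclideanSpace ℝ (Fin 0)) :=
      ⟨fun a b => PiLp.ext fun i => i.elim0⟩
    have hxx : x = xstar := Subsingleton.elim _ _
    subst hxx
    simp
  -- main case
  set Lmax : ℝ :=
    Finset.univ.sup' ⟨⟨0, lt_of_lt_of_le two_pos hn⟩, Finset.mem_univ _⟩ Li with hLmaxdef
  set C : ℕ := n.choose b with hCdef
  set F : EuclideanSpace ℝ (Fin d) → ℝ := fun y => (n : ℝ)⁻¹ * ∑ i, f i y with hFdef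
  set g : EuclideanSpace ℝ (Fin d) → EuclideanSpace ℝ (Fin d) := fun y => (n : ℝ)⁻¹ • ∑ i, f' i y with hgdef
  have hn0 : (0 : ℝ) < n := by positivity
  have hnR : (2 : ℝ) ≤ n := by exact_mod_cast hn
  have hb0 : (0 : ℝ) < b := by exact_mod_cast hb1
  have hbR : (1 : ℝ) ≤ b := by exact_mod_cast hb1
  have hbnR : (b : ℝ) ≤ n := by exact_mod_cast hbn
  have hC0 : (0 : ℝ) < C := by exact_mod_cast Nat.choose_pos hbn
  -- a unit vector
  set e : EuclideanSpace ℝ (Fin d) := EuclideanSpace.single (⟨0, hd⟩ : Fin d) (1 : ℝ) with hedef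
  have hnorme : ‖e‖ = 1 := by rw [hedef, EuclideanSpace.norm_single]; norm_num
  -- each Li is nonnegative
  have hLi : ∀ i, 0 ≤ Li i := by
    intro i
    have h1 := hconv i x (x + e)
    have h2 := hsmooth i x (x + e)
    rw [add_sub_cancel_left] at h1 h2
    rw [hnorme] at h2
    nlinarith
  have hLmax0 : 0 ≤ Lmax := le_trans (hLi ⟨0, lt_of_lt_of_le two_pos hn⟩)
    (Finset.le_sup' Li (Finset.mem_univ _))
  have hLmax : ∀ i, Li i ≤ Lmax := fun i => Finset.le_sup' Li (Finset.mem_univ i)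
  -- inner product of averaged gradients
  have hinner_g : ∀ y v : EuclideanSpace ℝ (Fin d), ⟪g y, v⟫ = (n : ℝ)⁻¹ * ∑ i, ⟪f' i y, v⟫ := by
    intro y v
    rw [hgdef]
    simp only [real_inner_smul_left, sum_inner]
  -- L is nonnegative
  have hL0 : 0 ≤ L := by
    have s1 := hsmoothf x (x + e)
    have s2 := hsmoothf (x + e) x
    rw [add_sub_cancel_left, hnorme] at s1
    rw [sub_add_cancel_left, norm_neg, hnorme] at s2
    have hmono : (n : ℝ)⁻¹ * ∑ i, ⟪f' i x, e⟫ + (n : ℝ)⁻¹ * ∑ i, ⟪f' i (x + e), -e⟫ ≤ 0 := by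
      rw [← mul_add, ← Finset.sum_add_distrib]
      have : ∀ i : Fin n, i ∈ Finset.univ → ⟪f' i x, e⟫ + ⟪f' i (x + e), -e⟫ ≤ 0 := by
        intro i _
        have c1 := hconv i x (x + e)
        have c2 := hconv i (x + e) x
        rw [add_sub_cancel_left] at c1
        rw [sub_add_cancel_left] at c2
        linarith
      have hsum := Finset.sum_le_sum this
      rw [Finset.sum_const, smul_zero] at hsum
      have : (0:ℝ) ≤ (n : ℝ)⁻¹ := by positivity
      nlinarith
    rw [hinner_g x e] at s1
    rw [hinner_g (x + e) (-e)] at s2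
    nlinarith
  -- quadratic bound on gradient norm at any point, from minimality + smoothness of f
  have hgrad_bound : ∀ y : EuclideanSpace ℝ (Fin d), ‖g y‖ ^ 2 ≤ 2 * L * (F y - F xstar) := by
    intro y
    apply aux_quad (by positivity) hL0
    intro t ht
    have hmn : F xstar ≤ F (y - t • g y) := hmin (y - t • g y)
    have hsm : F (y - t • g y)
        ≤ F y + ⟪g y, (y - t • g y) - y⟫ + L / 2 * ‖(y - t • g y) - y‖ ^ 2 :=
      hsmoothf y (y - t • g y)
    have key1 : ⟪g y, (y - t • g y) - y⟫ = -(t * ‖g y‖ ^ 2) := by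
      rw [sub_sub_cancel_left, inner_neg_right, real_inner_smul_right,
        real_inner_self_eq_norm_sq]
    have key2 : ‖(y - t • g y) - y‖ ^ 2 = t ^ 2 * ‖g y‖ ^ 2 := by
      rw [sub_sub_cancel_left, norm_neg, norm_smul, mul_pow, Real.norm_eq_abs, sq_abs]
    rw [key1, key2] at hsm
    nlinarith
  -- gradient at xstar vanishes
  have hgstar : g xstar = 0 := by
    have h := hgrad_bound xstar
    simp only [sub_self, mul_zero] at h
    have h2 : ‖g xstar‖ ^ 2 = 0 := le_antisymm h (pow_nonneg (norm_nonneg _) 2)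
    have h3 : ‖g xstar‖ = 0 := by nlinarith [norm_nonneg (g xstar)]
    exact norm_eq_zero.mp h3
  have hsum_fstar : ∑ i, f' i xstar = 0 := by
    have h : (n : ℝ) • g xstar = (n : ℝ) • (0 : EuclideanSpace ℝ (Fin d)) := by rw [hgstar]
    rw [hgdef] at h
    simp only [smul_smul, smul_zero] at h
    rwa [mul_inv_cancel₀ (ne_of_gt hn0), one_smul] at h
  -- the Bregman-like quantity
  set D : ℝ := F x - F xstar with hDdef
  have hD0 : 0 ≤ D := sub_nonneg.mpr (hmin x)
  -- per-component bounds
  set a : Fin n → EuclideanSpace ℝ (Fin d) := fun i => f' i x - f' i xstar with hadef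
  have hT : ∑ i, ‖a i‖ ^ 2 ≤ 2 * Lmax * ((n : ℝ) * D) := by
    have hDi : ∀ i, 0 ≤ f i x - f i xstar - ⟪f' i xstar, x - xstar⟫ := by
      intro i; have := hconv i xstar x; linarith
    have hai : ∀ i, ‖a i‖ ^ 2 ≤ 2 * Li i * (f i x - f i xstar - ⟪f' i xstar, x - xstar⟫) := by
      intro i
      apply aux_quad (by positivity) (hLi i)
      intro t ht
      have c1 := hconv i xstar (x - t • a i)
      have s1 := hsmooth i x (x - t • a i)
      rw [sub_sub_cancel_left] at s1
      rw [inner_neg_right, real_inner_smul_right,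
        norm_neg, norm_smul, mul_pow, Real.norm_eq_abs, sq_abs] at s1
      rw [show x - t • a i - xstar = (x - xstar) - t • a i by abel] at c1
      rw [inner_sub_right, real_inner_smul_right] at c1
      have ha2 : ⟪f' i x, a i⟫ - ⟪f' i xstar, a i⟫ = ‖a i‖ ^ 2 := by
        rw [← inner_sub_left, show f' i x - f' i xstar = a i from rfl,
          real_inner_self_eq_norm_sq]
      nlinarith
    calc ∑ i, ‖a i‖ ^ 2
        ≤ ∑ i, 2 * Lmax * (f i x - f i xstar - ⟪f' i xstar, x - xstar⟫) := by
          apply Finset.sum_le_sum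
          intro i _
          refine le_trans (hai i) ?_
          apply mul_le_mul_of_nonneg_right _ (hDi i)
          nlinarith [hLmax i, hLi i]
      _ = 2 * Lmax * ((n : ℝ) * D) := by
          rw [← Finset.mul_sum]
          congr 1
          rw [Finset.sum_sub_distrib, Finset.sum_sub_distrib, ← sum_inner, hsum_fstar]
          simp only [inner_zero_left, sub_zero]
          rw [hDdef, hFdef]
          field_simp
  have hU : ‖∑ i, a i‖ ^ 2 ≤ 2 * L * ((n : ℝ) ^ 2 * D) := by
    have hSe : ∑ i, a i = (n : ℝ) • g x := by
      rw [hadef, hgdef, Finset.sum_sub_distrib, hsum_fstar, sub_zero, smul_smul,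
        mul_inv_cancel₀ (ne_of_gt hn0), one_smul]
    rw [hSe, norm_smul, mul_pow, Real.norm_eq_abs, sq_abs]
    have h1 := hgrad_bound x
    rw [← hDdef] at h1
    have h2 := mul_le_mul_of_nonneg_left h1 (sq_nonneg (n:ℝ))
    nlinarith
  -- counting
  set N₁ : ℕ := (n - 1).choose (b - 1) with hN1def
  set N₂ : ℕ := if 2 ≤ b then (n - 2).choose (b - 2) else 0 with hN2def
  have hcount1 : ∀ i : Fin n,
      (((Finset.univ : Finset (Fin n)).powersetCard b).filter (fun B => i ∈ B ∧ i ∈ B)).card = N₁ := by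
    intro i
    rw [Finset.filter_congr (fun B _ => show (i ∈ B ∧ i ∈ B) ↔ ({i} : Finset (Fin n)) ⊆ B by
      simp [Finset.singleton_subset_iff])]
    rw [count_contains {i} (by simpa using hb1)]
    simp [hN1def]
  have hcount2 : ∀ i j : Fin n, i ≠ j →
      (((Finset.univ : Finset (Fin n)).powersetCard b).filter (fun B => i ∈ B ∧ j ∈ B)).card = N₂ := by
    intro i j hij
    by_cases hb2 : 2 ≤ b
    · have hne : i ∉ ({j} : Finset (Fin n)) := by simpa using hij
      have hcard : ({i, j} : Finset (Fin n)).card = 2 := by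
        rw [Finset.card_insert_of_notMem hne, Finset.card_singleton]
      rw [Finset.filter_congr (fun B _ => show (i ∈ B ∧ j ∈ B) ↔ ({i, j} : Finset (Fin n)) ⊆ B by
        simp [Finset.insert_subset_iff])]
      rw [count_contains ({i, j} : Finset (Fin n)) (hcard ▸ hb2), hcard]
      rw [hN2def, if_pos hb2]
      simp
    · have hb : b = 1 := by omega
      rw [hN2def, if_neg hb2, Finset.card_eq_zero, Finset.filter_eq_empty_iff]
      intro B hB
      rw [Finset.mem_powersetCard_univ, hb] at hB
      rintro ⟨hiB, hjB⟩
      have : 1 < B.card := Finset.one_lt_card.mpr ⟨i, hiB, j, hjB, hij⟩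
      omega
  -- natural-number identities
  have idA : n * N₁ = C * b := by
    have h := Nat.add_one_mul_choose_eq (n - 1) (b - 1)
    have e1 : n - 1 + 1 = n := by omega
    have e2 : b - 1 + 1 = b := by omega
    simp only [Nat.succ_eq_add_one, e1, e2] at h
    exact h
  have idB : n * (n - 1) * N₂ = C * (b * (b - 1)) := by
    by_cases hb2 : 2 ≤ b
    · have h := Nat.add_one_mul_choose_eq (n - 2) (b - 2)
      have e1 : n - 2 + 1 = n - 1 := by omega
      have e2 : b - 2 + 1 = b - 1 := by omega
      simp only [Nat.succ_eq_add_one, e1, e2] at h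
      rw [hN2def, if_pos hb2]
      calc n * (n - 1) * (n - 2).choose (b - 2)
          = n * ((n - 1) * (n - 2).choose (b - 2)) := by ring
        _ = n * ((n - 1).choose (b - 1) * (b - 1)) := by rw [h]
        _ = (n * N₁) * (b - 1) := by rw [hN1def]; ring
        _ = C * b * (b - 1) := by rw [idA]
        _ = C * (b * (b - 1)) := by ring
    · have hb : b = 1 := by omega
      rw [hN2def, if_neg hb2, hb]
      simp
  -- real versions
  have idAR : (n : ℝ) * N₁ = (C : ℝ) * b := by exact_mod_cast congrArg (Nat.cast : ℕ → ℝ) idA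
  have idBR : (n : ℝ) * ((n : ℝ) - 1) * N₂ = (C : ℝ) * ((b : ℝ) * ((b : ℝ) - 1)) := by
    have h1 : ((n - 1 : ℕ) : ℝ) = (n : ℝ) - 1 := by
      rw [Nat.cast_sub (by omega)]; norm_num
    have h2 : ((b - 1 : ℕ) : ℝ) = (b : ℝ) - 1 := by
      rw [Nat.cast_sub hb1]; norm_num
    have := congrArg (Nat.cast : ℕ → ℝ) idB
    push_cast [h1, h2] at this
    linarith [this]
  -- expand the sum
  have hexp := expand_sum a N₁ N₂ hcount1 hcount2
  -- rewrite the LHS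
  have hLHS : ∑ B ∈ (Finset.univ : Finset (Fin n)).powersetCard b,
      ‖(b : ℝ)⁻¹ • ∑ i ∈ B, f' i x - (b : ℝ)⁻¹ • ∑ i ∈ B, f' i xstar‖ ^ 2
      = ((b : ℝ)⁻¹) ^ 2 * ∑ B ∈ (Finset.univ : Finset (Fin n)).powersetCard b,
          ‖∑ i ∈ B, a i‖ ^ 2 := by
    rw [Finset.mul_sum]
    refine Finset.sum_congr rfl fun B _ => ?_
    rw [← smul_sub, ← Finset.sum_sub_distrib, norm_smul, mul_pow, Real.norm_eq_abs, sq_abs]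
  -- rewrite the rhs inner product term
  have hinner0 : ⟪(n : ℝ)⁻¹ • ∑ j, f' j xstar, x - xstar⟫ = 0 := by
    have : (n : ℝ)⁻¹ • ∑ j, f' j xstar = g xstar := rfl
    rw [this, hgstar, inner_zero_left]
  rw [hLHS, hexp, hinner0, sub_zero]
  set T : ℝ := ∑ i, ‖a i‖ ^ 2 with hTdef
  set U : ℝ := ‖∑ i, a i‖ ^ 2 with hUdef
  have hT0 : 0 ≤ T := Finset.sum_nonneg fun i _ => pow_nonneg (norm_nonneg _) 2
  have hU0 : 0 ≤ U := pow_nonneg (norm_nonneg _) 2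
  -- main polynomial inequality
  have main : (n : ℝ) * ((n : ℝ) - 1) * ((N₁ : ℝ) * T + (N₂ : ℝ) * (U - T))
      ≤ 2 * b * C * (n : ℝ) * (((n : ℝ) - b) * Lmax + (n : ℝ) * ((b : ℝ) - 1) * L) * D := by
    have e1 : (n : ℝ) * ((n : ℝ) - 1) * ((N₁ : ℝ) * T + (N₂ : ℝ) * (U - T))
        = (C : ℝ) * b * (((n : ℝ) - b) * T + ((b : ℝ) - 1) * U) := by
      have : (n : ℝ) * ((n : ℝ) - 1) * ((N₁ : ℝ) * T + (N₂ : ℝ) * (U - T))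
          = (((n : ℝ) - 1) * ((n : ℝ) * N₁)) * T
            + ((n : ℝ) * ((n : ℝ) - 1) * N₂) * (U - T) := by ring
      rw [this, idAR, idBR]; ring
    rw [e1]
    have b1 : ((n : ℝ) - b) * T ≤ ((n : ℝ) - b) * (2 * Lmax * ((n : ℝ) * D)) :=
      mul_le_mul_of_nonneg_left hT (by linarith)
    have b2 : ((b : ℝ) - 1) * U ≤ ((b : ℝ) - 1) * (2 * L * ((n : ℝ) ^ 2 * D)) :=
      mul_le_mul_of_nonneg_left hU (by linarith)
    have hCb : (0 : ℝ) ≤ (C : ℝ) * b := by positivity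
    calc (C : ℝ) * b * (((n : ℝ) - b) * T + ((b : ℝ) - 1) * U)
        ≤ (C : ℝ) * b * (((n : ℝ) - b) * (2 * Lmax * ((n : ℝ) * D))
            + ((b : ℝ) - 1) * (2 * L * ((n : ℝ) ^ 2 * D))) := by
          apply mul_le_mul_of_nonneg_left _ hCb
          linarith
      _ = 2 * b * C * (n : ℝ) * (((n : ℝ) - b) * Lmax + (n : ℝ) * ((b : ℝ) - 1) * L) * D := by
          ring
  -- finish by dividing
  have hq : (0 : ℝ) < (C : ℝ) * (b : ℝ) ^ 2 * (n : ℝ) * ((n : ℝ) - 1) := by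
    have : (0:ℝ) < (n : ℝ) - 1 := by linarith
    positivity
  have lhs_eq : ((C : ℝ))⁻¹ * ((b : ℝ)⁻¹ ^ 2 * ((N₁ : ℝ) * T + (N₂ : ℝ) * (U - T)))
      = ((n : ℝ) * ((n : ℝ) - 1) * ((N₁ : ℝ) * T + (N₂ : ℝ) * (U - T)))
        / ((C : ℝ) * (b : ℝ) ^ 2 * (n : ℝ) * ((n : ℝ) - 1)) := by
    rw [eq_div_iff (ne_of_gt hq)]
    field_simp
  have rhs_eq : 2 * (((n : ℝ) - b) / (b * ((n : ℝ) - 1)) * Lmax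
        + (n : ℝ) * ((b : ℝ) - 1) / (b * ((n : ℝ) - 1)) * L) * D
      = (2 * b * C * (n : ℝ) * (((n : ℝ) - b) * Lmax + (n : ℝ) * ((b : ℝ) - 1) * L) * D)
        / ((C : ℝ) * (b : ℝ) ^ 2 * (n : ℝ) * ((n : ℝ) - 1)) := by
    rw [eq_div_iff (ne_of_gt hq)]
    have hbn1 : (b : ℝ) * ((n : ℝ) - 1) ≠ 0 := by
      have : (0:ℝ) < (n : ℝ) - 1 := by linarith
      positivity
    have hn1 : (n : ℝ) - 1 ≠ 0 := by linarith
    field_simp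
  rw [lhs_eq, rhs_eq]
  exact (div_le_div_iff_of_pos_right hq).mpr main
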